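/- arXiv:1006.3830 — 2 statements merged into one kernel-verified Lean document; each statement's English description precedes it below -/
import Mathlib

section
/- In ℚ[[q̌]], let Φ(q̌) = −log q̌ − ∑_{k=1}^{5} ((−1)^k/k)((3k)!/(k!)^3) q̌^k treated via the substitution exp(−Φ(q̌)) = q̌ · exp(∑_{k=1}^{5} ((−1)^k/k)((3k)!/(k!)^3) q̌^k). Define the formal inverse series q̌(q) of the map q(q̌) = q̌·exp(∑_{k=1}^{5} ((−1)^k/k)((3k)!/(k!)^3) q̌^k). Then (q/q̌(q))^{1/3} ≡ 1 − 2q + 5q² − 32q³ + 286q⁴ − 3038q⁵ (mod q⁶), where the cube root is the formal power series with constant term 1. -/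
open PowerSeries

set_option maxHeartbeats 2000000 in
/-- Let `p = ∑_{k=1}^5 ((-1)^k/k)((3k)!/(k!)³) q̌^k`, let `E = exp p` (characterized by
`E(0) = 1` and `E' = p' E`), let `Q(q̌) = q̌ E(q̌)` be the (truncated) mirror map, and let
`r = q̌(q)` be its formal compositional inverse (so `Q(r) = q` and `r = q·u` for a unit
part `u`).  Then the cube root `s` of `q/r = u⁻¹` with constant term `1` satisfies
`s ≡ 1 - 2q + 5q² - 32q³ + 286q⁴ - 3038q⁵ (mod q⁶)`. -/
theorem stmt11 (p E Q r u s : ℚ⟦X⟧)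
    (hp : p = PowerSeries.mk fun k =>
      if 1 ≤ k ∧ k ≤ 5 then
        ((-1) ^ k / (k : ℚ)) * ((Nat.factorial (3 * k) : ℚ) / ((Nat.factorial k : ℚ)) ^ 3)
      else 0)
    (hE0 : PowerSeries.constantCoeff E = 1)
    (hE : PowerSeries.derivativeFun E = PowerSeries.derivativeFun p * E)
    (hQ : Q = PowerSeries.X * E)
    (hr0 : PowerSeries.constantCoeff r = 0)
    (hrinv : ∀ N : ℕ,
      PowerSeries.trunc N (Polynomial.aeval r (PowerSeries.trunc N Q)) =
        PowerSeries.trunc N (PowerSeries.X : ℚ⟦X⟧))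
    (hu : r = PowerSeries.X * u)
    (hs0 : PowerSeries.constantCoeff s = 1)
    (hs : s ^ 3 * u = 1) :
    PowerSeries.trunc 6 s =
      PowerSeries.trunc 6 (1 - 2 * PowerSeries.X + 5 * PowerSeries.X ^ 2
        - 32 * PowerSeries.X ^ 3 + 286 * PowerSeries.X ^ 4 - 3038 * PowerSeries.X ^ 5) := by
  -- coefficients of p
  have hp1 : PowerSeries.coeff 1 p = -6 := by rw [hp, coeff_mk]; norm_num [Nat.factorial]
  have hp2 : PowerSeries.coeff 2 p = 45 := by rw [hp, coeff_mk]; norm_num [Nat.factorial]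
  have hp3 : PowerSeries.coeff 3 p = -560 := by rw [hp, coeff_mk]; norm_num [Nat.factorial]
  have hp4 : PowerSeries.coeff 4 p = 17325/2 := by rw [hp, coeff_mk]; norm_num [Nat.factorial]
  have hp5 : PowerSeries.coeff 5 p = -756756/5 := by rw [hp, coeff_mk]; norm_num [Nat.factorial]
  -- coefficients of E
  have he0 : PowerSeries.coeff 0 E = 1 := by rw [coeff_zero_eq_constantCoeff, hE0]
  have keyE : ∀ n : ℕ, PowerSeries.coeff (n+1) E * (n+1) =
      ∑ i ∈ Finset.range (n+1),
        (PowerSeries.coeff (i+1) p * (i+1)) * PowerSeries.coeff (n-i) E := by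
    intro n
    have h := congrArg (PowerSeries.coeff n) hE
    simp only [show ∀ f : ℚ⟦X⟧, f.derivativeFun = derivative ℚ f from fun f => rfl] at h
    rw [coeff_derivativeFun, coeff_mul, Finset.Nat.sum_antidiagonal_eq_sum_range_succ_mk] at h
    simpa only [coeff_derivativeFun] using h
  have he1 : PowerSeries.coeff 1 E = -6 := by
    have h := keyE 0
    simp only [Finset.sum_range_succ, Finset.sum_range_zero, he0, hp1] at h
    norm_num at h; linarith
  have he2 : PowerSeries.coeff 2 E = 63 := by
    have h := keyE 1
    simp only [Finset.sum_range_succ, Finset.sum_range_zero] at h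
    norm_num [he0, he1, hp1, hp2] at h; linarith
  have he3 : PowerSeries.coeff 3 E = -866 := by
    have h := keyE 2
    simp only [Finset.sum_range_succ, Finset.sum_range_zero] at h
    norm_num [he0, he1, he2, hp1, hp2, hp3] at h; linarith
  have he4 : PowerSeries.coeff 4 E = 13899 := by
    have h := keyE 3
    simp only [Finset.sum_range_succ, Finset.sum_range_zero] at h
    norm_num [he0, he1, he2, he3, hp1, hp2, hp3, hp4] at h; linarith
  have he5 : PowerSeries.coeff 5 E = -246366 := by
    have h := keyE 4
    simp only [Finset.sum_range_succ, Finset.sum_range_zero] at h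
    norm_num [he0, he1, he2, he3, he4, hp1, hp2, hp3, hp4, hp5] at h; linarith
  -- coefficients of Q
  have hq0 : PowerSeries.coeff 0 Q = 0 := by
    rw [hQ, coeff_zero_eq_constantCoeff]; simp
  have hq1 : PowerSeries.coeff 1 Q = 1 := by rw [hQ, coeff_succ_X_mul, he0]
  have hq2 : PowerSeries.coeff 2 Q = -6 := by rw [hQ, coeff_succ_X_mul, he1]
  have hq3 : PowerSeries.coeff 3 Q = 63 := by rw [hQ, coeff_succ_X_mul, he2]
  have hq4 : PowerSeries.coeff 4 Q = -866 := by rw [hQ, coeff_succ_X_mul, he3]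
  have hq5 : PowerSeries.coeff 5 Q = 13899 := by rw [hQ, coeff_succ_X_mul, he4]
  have hq6 : PowerSeries.coeff 6 Q = -246366 := by rw [hQ, coeff_succ_X_mul, he5]
  -- the truncated mirror map
  have htr : PowerSeries.trunc 7 Q = Polynomial.monomial 1 (1:ℚ) + Polynomial.monomial 2 (-6)
      + Polynomial.monomial 3 63 + Polynomial.monomial 4 (-866)
      + Polynomial.monomial 5 13899 + Polynomial.monomial 6 (-246366) := by
    rw [show PowerSeries.trunc 7 Q = ∑ m ∈ Finset.range 7, Polynomial.monomial m (PowerSeries.coeff m Q) by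
      ext k; simp [coeff_trunc, Polynomial.finset_sum_coeff, Polynomial.coeff_monomial]]
    rw [show (7:ℕ) = 6+1 from rfl]
    simp only [Finset.sum_range_succ, Finset.sum_range_zero, hq0, hq1, hq2, hq3, hq4, hq5, hq6]
    simp
  have key : ∀ n : ℕ, n < 7 →
      1 * PowerSeries.coeff n (X^1 * u^1) + (-6) * PowerSeries.coeff n (X^2 * u^2)
      + 63 * PowerSeries.coeff n (X^3 * u^3) + (-866) * PowerSeries.coeff n (X^4 * u^4)
      + 13899 * PowerSeries.coeff n (X^5 * u^5)
      + (-246366) * PowerSeries.coeff n (X^6 * u^6)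
      = PowerSeries.coeff n (X : ℚ⟦X⟧) := by
    intro n hn
    have h := congrArg (fun P => Polynomial.coeff P n) (hrinv 7)
    simp only [coeff_trunc, if_pos hn] at h
    rw [htr] at h
    simp only [map_add, Polynomial.aeval_monomial, ← C_eq_algebraMap, map_mul, map_add,
      coeff_C_mul] at h
    rw [hu] at h
    simpa only [mul_pow] using h
  -- coefficients of u
  have hu0 : PowerSeries.coeff 0 u = 1 := by
    have h := key 1 (by norm_num)
    simp only [coeff_X_pow_mul', coeff_X] at h
    norm_num at h
    simpa using h
  have hu1 : PowerSeries.coeff 1 u = 6 := by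
    have h := key 2 (by norm_num)
    simp only [coeff_X_pow_mul', coeff_X] at h
    simp only [pow_succ, pow_zero, one_mul, coeff_mul,
      Finset.Nat.sum_antidiagonal_eq_sum_range_succ_mk, Finset.sum_range_succ,
      Finset.sum_range_zero,
      hu0] at h
    norm_num at h
    linarith
  have hu2 : PowerSeries.coeff 2 u = 9 := by
    have h := key 3 (by norm_num)
    simp only [coeff_X_pow_mul', coeff_X] at h
    simp only [pow_succ, pow_zero, one_mul, coeff_mul,
      Finset.Nat.sum_antidiagonal_eq_sum_range_succ_mk, Finset.sum_range_succ,
      Finset.sum_range_zero,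
      hu0, hu1] at h
    norm_num at h
    linarith
  have hu3 : PowerSeries.coeff 3 u = 56 := by
    have h := key 4 (by norm_num)
    simp only [coeff_X_pow_mul', coeff_X] at h
    simp only [pow_succ, pow_zero, one_mul, coeff_mul,
      Finset.Nat.sum_antidiagonal_eq_sum_range_succ_mk, Finset.sum_range_succ,
      Finset.sum_range_zero,
      hu0, hu1, hu2] at h
    norm_num at h
    linarith
  have hu4 : PowerSeries.coeff 4 u = -300 := by
    have h := key 5 (by norm_num)
    simp only [coeff_X_pow_mul', coeff_X] at h
    simp only [pow_succ, pow_zero, one_mul, coeff_mul,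
      Finset.Nat.sum_antidiagonal_eq_sum_range_succ_mk, Finset.sum_range_succ,
      Finset.sum_range_zero,
      hu0, hu1, hu2, hu3] at h
    norm_num at h
    linarith
  have hu5 : PowerSeries.coeff 5 u = 3942 := by
    have h := key 6 (by norm_num)
    simp only [coeff_X_pow_mul', coeff_X] at h
    simp only [pow_succ, pow_zero, one_mul, coeff_mul,
      Finset.Nat.sum_antidiagonal_eq_sum_range_succ_mk, Finset.sum_range_succ,
      Finset.sum_range_zero,
      hu0, hu1, hu2, hu3, hu4] at h
    norm_num at h
    linarith
  -- coefficients of s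
  have hs0' : PowerSeries.coeff 0 s = 1 := by rw [coeff_zero_eq_constantCoeff, hs0]
  have keyS : ∀ n : ℕ, PowerSeries.coeff n (s^3 * u) = PowerSeries.coeff n 1 :=
    fun n => congrArg (PowerSeries.coeff n) hs
  have hs1 : PowerSeries.coeff 1 s = -2 := by
    have h := keyS 1
    simp only [pow_succ, pow_zero, one_mul, coeff_mul,
      Finset.Nat.sum_antidiagonal_eq_sum_range_succ_mk, Finset.sum_range_succ,
      Finset.sum_range_zero,
      coeff_one, hu0, hu1, hs0'] at h
    norm_num at h
    linarith
  have hs2 : PowerSeries.coeff 2 s = 5 := by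
    have h := keyS 2
    simp only [pow_succ, pow_zero, one_mul, coeff_mul,
      Finset.Nat.sum_antidiagonal_eq_sum_range_succ_mk, Finset.sum_range_succ,
      Finset.sum_range_zero,
      coeff_one, hu0, hu1, hu2, hs0', hs1] at h
    norm_num at h
    linarith
  have hs3 : PowerSeries.coeff 3 s = -32 := by
    have h := keyS 3
    simp only [pow_succ, pow_zero, one_mul, coeff_mul,
      Finset.Nat.sum_antidiagonal_eq_sum_range_succ_mk, Finset.sum_range_succ,
      Finset.sum_range_zero,
      coeff_one, hu0, hu1, hu2, hu3, hs0', hs1, hs2] at h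
    norm_num at h
    linarith
  have hs4 : PowerSeries.coeff 4 s = 286 := by
    have h := keyS 4
    simp only [pow_succ, pow_zero, one_mul, coeff_mul,
      Finset.Nat.sum_antidiagonal_eq_sum_range_succ_mk, Finset.sum_range_succ,
      Finset.sum_range_zero,
      coeff_one, hu0, hu1, hu2, hu3, hu4, hs0', hs1, hs2, hs3] at h
    norm_num at h
    linarith
  have hs5 : PowerSeries.coeff 5 s = -3038 := by
    have h := keyS 5
    simp only [pow_succ, pow_zero, one_mul, coeff_mul,
      Finset.Nat.sum_antidiagonal_eq_sum_range_succ_mk, Finset.sum_range_succ,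
      Finset.sum_range_zero,
      coeff_one, hu0, hu1, hu2, hu3, hu4, hu5, hs0', hs1, hs2, hs3,
      hs4] at h
    norm_num at h
    linarith
  -- conclusion
  have h2 : (2 : ℚ⟦X⟧) = C 2 := (map_ofNat C 2).symm
  have h5 : (5 : ℚ⟦X⟧) = C 5 := (map_ofNat C 5).symm
  have h32 : (32 : ℚ⟦X⟧) = C 32 := (map_ofNat C 32).symm
  have h286 : (286 : ℚ⟦X⟧) = C 286 := (map_ofNat C 286).symm
  have h3038 : (3038 : ℚ⟦X⟧) = C 3038 := (map_ofNat C 3038).symm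
  ext n
  rw [coeff_trunc, coeff_trunc]
  split_ifs with h
  · interval_cases n <;>
      simp [hs0', hs1, hs2, hs3, hs4, hs5, h2, h5, h32, h286, h3038, coeff_one, coeff_X,
        coeff_X_pow, coeff_C_mul]
  · rfl
end

section
/- Let u : Δ → ℂ^n be continuous on the closed unit disk and holomorphic on the open disk, with components u = (u_1, …, u_n) all nowhere zero on the closed disk, and suppose that |u_i(z)| = |u_1(z)| for all z ∈ ∂Δ and all i. Then each ratio u_i/u_1 is a constant c_i with |c_i| = 1; i.e., the image of u lies in the complex line {(ζ, c_1ζ, …, c_{n−1}ζ) : ζ ∈ ℂ^×} (after relabeling). -/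
/-- If `u_0, …, u_{n-1}` are holomorphic on the open unit disk, continuous on the closed
disk, nowhere zero on the closed disk, and `|u_i| = |u_0|` on the boundary circle, then each
`u_i` is a unimodular constant multiple of `u_0`: the disk lies on a complex line. -/
theorem stmt16 (n : ℕ) [NeZero n] (u : Fin n → ℂ → ℂ)
    (hd : ∀ i, DifferentiableOn ℂ (u i) (Metric.ball 0 1))
    (hc : ∀ i, ContinuousOn (u i) (Metric.closedBall 0 1))
    (hnz : ∀ i, ∀ z ∈ Metric.closedBall (0 : ℂ) 1, u i z ≠ 0)
    (hb : ∀ i, ∀ z ∈ Metric.sphere (0 : ℂ) 1, ‖u i z‖ = ‖u 0 z‖) :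
    ∀ i, ∃ c : ℂ, ‖c‖ = 1 ∧
      ∀ z ∈ Metric.closedBall (0 : ℂ) 1, u i z = c * u 0 z := by
  have hball : Metric.ball (0:ℂ) 1 ⊆ Metric.closedBall 0 1 := Metric.ball_subset_closedBall
  have hcl : closure (Metric.ball (0:ℂ) 1) = Metric.closedBall 0 1 :=
    closure_ball (0:ℂ) one_ne_zero
  -- general: quotient of two components is ≤ 1 in modulus on the closed ball
  have key : ∀ i j : Fin n, ∀ z ∈ Metric.closedBall (0:ℂ) 1,
      ‖u i z / u j z‖ ≤ 1 := by
    intro i j z hz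
    have hdc : DiffContOnCl ℂ (fun z => u i z / u j z) (Metric.ball 0 1) :=
      ⟨(hd i).div (hd j) (fun w hw => hnz j w (hball hw)),
        by rw [hcl]; exact (hc i).div (hc j) (fun w hw => hnz j w hw)⟩
    refine Complex.norm_le_of_forall_mem_frontier_norm_le (C := 1) Metric.isBounded_ball hdc
      (fun w hw => ?_) (by rwa [hcl])
    rw [frontier_ball (0:ℂ) one_ne_zero] at hw
    have hws : w ∈ Metric.closedBall (0:ℂ) 1 := Metric.sphere_subset_closedBall hw
    have h1 : ‖u i w‖ = ‖u j w‖ := by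
      rw [hb i w hw, hb j w hw]
    simp only [norm_div, h1]
    exact div_self_le_one _
  intro i
  set f : ℂ → ℂ := fun z => u i z / u 0 z with hf
  have habs : ∀ z ∈ Metric.closedBall (0:ℂ) 1, ‖f z‖ = 1 := by
    intro z hz
    have h1 := key i 0 z hz
    have h2 := key 0 i z hz
    have hu0 := hnz 0 z hz
    have hui := hnz i z hz
    rw [norm_div] at h1 h2 ⊢
    have hpos : 0 < ‖u 0 z‖ := norm_pos_iff.mpr hu0
    have hpos' : 0 < ‖u i z‖ := norm_pos_iff.mpr hui
    rw [div_le_one hpos] at h1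
    rw [div_le_one hpos'] at h2
    rw [div_eq_one_iff_eq hpos.ne']
    exact le_antisymm h1 h2
  have hdc : DiffContOnCl ℂ f (Metric.ball 0 1) :=
    ⟨(hd i).div (hd 0) (fun w hw => hnz 0 w (hball hw)),
      by rw [hcl]; exact (hc i).div (hc 0) (fun w hw => hnz 0 w hw)⟩
  have h0 : (0:ℂ) ∈ Metric.ball (0:ℂ) 1 := by simp
  have hmax : IsMaxOn (norm ∘ f) (Metric.ball 0 1) 0 := by
    intro z hz
    simp only [Function.comp_apply, Set.mem_setOf_eq,
      habs z (hball hz), habs 0 (hball h0)]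
    exact le_refl _
  have heq := Complex.eqOn_closure_of_isPreconnected_of_isMaxOn_norm
    (convex_ball (0:ℂ) 1).isPreconnected Metric.isOpen_ball hdc h0 hmax
  rw [hcl] at heq
  refine ⟨f 0, habs 0 (hball h0), fun z hz => ?_⟩
  have := heq hz
  simp only [Function.const_apply] at this
  have hu0 := hnz 0 z hz
  rw [← this]
  exact (div_mul_cancel₀ _ hu0).symm
end
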